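/- Let Q = Σ_{i=1}^n η_i(Z_i + δ_i)² where Z_1,…,Z_n are independent standard normal random variables and η_i, δ_i are real constants, not all η_i zero. Let L = max_i |η_i|, ξ = Σ_i η_i δ_i² + Σ_i η_i, and for t ∈ (0, 1/(2L)) define α(L,t) = ℒ₁(tL)/L² − t/L, β(L,t) = tL/(L²(1 − 2tL)) − t/L, and ν(t) = 2(β(L,t) Σ_i η_i² δ_i² + α(L,t) Σ_i η_i²). Then for every q > ξ and every t ∈ (0, 1/(2L)), P(Q > q) ≤ exp(ν(t)/2 − (q − ξ)t); and for every q < ξ and every t ∈ (0, 1/(2L)), P(Q < q) ≤ exp(ν(t)/2 − (ξ − q)t). -/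

import Mathlib

open MeasureTheory ProbabilityTheory Real
open scoped ENNReal NNReal

/-- `ℒ₁(y) = -log(1 - 2y)/2`. -/
noncomputable def L1 (y : ℝ) : ℝ := -Real.log (1 - 2 * y) / 2


lemma hasSum_L1_sub {y : ℝ} (hy : |y| < 1/2) :
    HasSum (fun n : ℕ => (2*y)^(n+2)/(n+2)/2) (L1 y - y) := by
  have h2y : |2*y| < 1 := by rw [abs_mul, abs_two]; linarith
  have h' : HasSum (fun n : ℕ => (2*y)^(n+1)/(n+1)/2) (L1 y) := by
    unfold L1
    exact (hasSum_pow_div_log_of_abs_lt_one h2y).div_const 2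
  have h'' := (hasSum_nat_add_iff' (f := fun n : ℕ => (2*y)^(n+1)/(n+1)/2) 1).mpr h'
  convert h'' using 2 with n
  · rfl
  · push_cast; ring_nf
  · simp

lemma L1_key {x y : ℝ} (hx0 : 0 < x) (hx : x < 1/2) (hy : |y| ≤ x) :
    L1 y - y ≤ y^2/x^2 * (L1 x - x) := by
  have hyx : |y| < 1/2 := lt_of_le_of_lt hy hx
  have hxx : |x| < 1/2 := by rwa [abs_of_pos hx0]
  have h1 := hasSum_L1_sub hyx
  have h2 := (hasSum_L1_sub hxx).mul_left (y^2/x^2)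
  refine hasSum_le (fun n => ?_) h1 h2
  have hne : x ≠ 0 := hx0.ne'
  have key : (2*y)^(n+2) ≤ y^2/x^2 * (2*x)^(n+2) := by
    calc (2*y)^(n+2) ≤ |(2*y)^(n+2)| := le_abs_self _
      _ = (2*|y|)^(n+2) := by rw [abs_pow, abs_mul, abs_two]
      _ = 2^(n+2) * (|y|^n * y^2) := by rw [mul_pow, pow_add (|y|), sq_abs]
      _ ≤ 2^(n+2) * (x^n * y^2) :=
          mul_le_mul_of_nonneg_left (mul_le_mul_of_nonneg_right
            (pow_le_pow_left₀ (abs_nonneg _) hy n) (sq_nonneg y)) (by positivity)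
      _ = y^2/x^2 * (2*x)^(n+2) := by
          rw [mul_pow]
          field_simp
          ring
  calc (2*y)^(n+2)/(n+2)/2 ≤ (y^2/x^2 * (2*x)^(n+2))/(n+2)/2 := by gcongr
    _ = y^2/x^2 * ((2*x)^(n+2)/(n+2)/2) := by ring

lemma L2_key {x y : ℝ} (hx0 : 0 < x) (hx : x < 1/2) (hy : |y| ≤ x) :
    y/(1-2*y) - y ≤ y^2/x^2 * (x/(1-2*x) - x) := by
  have hyx : y ≤ x := le_trans (le_abs_self y) hy
  have hy2 : (0:ℝ) < 1 - 2*y := by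
    have := neg_abs_le y; nlinarith
  have hx2 : (0:ℝ) < 1 - 2*x := by linarith
  have h1 : y/(1-2*y) - y = 2*y^2/(1-2*y) := by
    rw [eq_div_iff hy2.ne', sub_mul, div_mul_cancel₀ _ hy2.ne']; ring
  have h2 : y^2/x^2 * (x/(1-2*x) - x) = 2*y^2/(1-2*x) := by
    rw [show x/(1-2*x) - x = 2*x^2/(1-2*x) by
      rw [eq_div_iff hx2.ne', sub_mul, div_mul_cancel₀ _ hx2.ne']; ring]
    field_simp
  rw [h1, h2]
  exact div_le_div_of_nonneg_left (by positivity) hx2 (by linarith)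

lemma exp_sq_eq {s δ : ℝ} (hs : s < 1/2) (x : ℝ) :
    gaussianPDFReal 0 1 x * Real.exp (s * (x + δ)^2) =
      Real.exp (s/(1-2*s) * δ^2) * ((Real.sqrt (2*π))⁻¹ *
        Real.exp (-((1-2*s)/2) * (x - 2*s*δ/(1-2*s))^2)) := by
  have hu : (0:ℝ) < 1 - 2*s := by linarith
  simp only [gaussianPDFReal, NNReal.coe_one, mul_one, sub_zero]
  rw [mul_assoc, ← Real.exp_add, mul_left_comm, ← Real.exp_add]
  congr 2
  field_simp
  ring

lemma integral_exp_sq_gaussian {s δ : ℝ} (hs : s < 1/2) :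
    ∫ x, Real.exp (s * (x + δ)^2) ∂(gaussianReal 0 1)
      = Real.exp (L1 s + s/(1-2*s) * δ^2) := by
  have hu : (0:ℝ) < 1 - 2*s := by linarith
  have ha : (0:ℝ) < (1-2*s)/2 := by linarith
  have hmeas : Measurable fun x => (gaussianPDFReal 0 1 x).toNNReal :=
    (measurable_gaussianPDFReal 0 1).real_toNNReal
  have hd : gaussianPDF 0 1 = fun x => ((gaussianPDFReal 0 1 x).toNNReal : ℝ≥0∞) := rfl
  rw [gaussianReal_of_var_ne_zero _ one_ne_zero, hd,
    integral_withDensity_eq_integral_smul hmeas]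
  have h1 : ∀ x : ℝ, (gaussianPDFReal 0 1 x).toNNReal • Real.exp (s * (x + δ)^2)
      = Real.exp (s/(1-2*s) * δ^2) * ((Real.sqrt (2*π))⁻¹ *
        Real.exp (-((1-2*s)/2) * (x - 2*s*δ/(1-2*s))^2)) := by
    intro x
    rw [NNReal.smul_def, smul_eq_mul, Real.coe_toNNReal _ (gaussianPDFReal_nonneg 0 1 x)]
    exact exp_sq_eq hs x
  simp_rw [h1]
  rw [integral_const_mul, integral_const_mul,
    integral_sub_right_eq_self (μ := volume)
      (fun x => Real.exp (-((1-2*s)/2) * x^2)) (2*s*δ/(1-2*s)),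
    integral_gaussian]
  have hcc : (Real.sqrt (2*π))⁻¹ * Real.sqrt (π/((1-2*s)/2)) = Real.exp (L1 s) := by
    rw [show π/((1-2*s)/2) = (2*π)/(1-2*s) by rw [div_div_eq_mul_div, mul_comm π 2],
      Real.sqrt_div (by positivity) (1-2*s)]
    have h2π : Real.sqrt (2*π) ≠ 0 := by positivity
    rw [show Real.sqrt (1-2*s) = Real.exp (Real.log (1-2*s)/2) from by
      rw [← Real.log_sqrt hu.le, Real.exp_log (Real.sqrt_pos.mpr hu)]]
    rw [L1, neg_div, Real.exp_neg]
    field_simp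
  rw [hcc, ← Real.exp_add]
  ring_nf

lemma integrable_exp_sq_gaussian {s δ : ℝ} (hs : s < 1/2) :
    Integrable (fun x => Real.exp (s * (x + δ)^2)) (gaussianReal 0 1) := by
  have hu : (0:ℝ) < 1 - 2*s := by linarith
  have ha : (0:ℝ) < (1-2*s)/2 := by linarith
  have hmeas : Measurable fun x => (gaussianPDFReal 0 1 x).toNNReal :=
    (measurable_gaussianPDFReal 0 1).real_toNNReal
  have hd : gaussianPDF 0 1 = fun x => ((gaussianPDFReal 0 1 x).toNNReal : ℝ≥0∞) := rfl
  rw [gaussianReal_of_var_ne_zero _ one_ne_zero, hd,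
    integrable_withDensity_iff_integrable_smul hmeas]
  have h1 : ∀ x : ℝ, (gaussianPDFReal 0 1 x).toNNReal • Real.exp (s * (x + δ)^2)
      = Real.exp (s/(1-2*s) * δ^2) * ((Real.sqrt (2*π))⁻¹ *
        Real.exp (-((1-2*s)/2) * (x - 2*s*δ/(1-2*s))^2)) := by
    intro x
    rw [NNReal.smul_def, smul_eq_mul, Real.coe_toNNReal _ (gaussianPDFReal_nonneg 0 1 x)]
    exact exp_sq_eq hs x
  simp_rw [h1]
  exact (((integrable_exp_neg_mul_sq ha).comp_sub_right (2*s*δ/(1-2*s))).const_mul _).const_mul _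

lemma mgf_aux {Ω : Type*} [MeasureSpace Ω] [IsProbabilityMeasure (ℙ : Measure Ω)]
    {W : Ω → ℝ} (hW : Measurable W) (hWd : Measure.map W ℙ = gaussianReal 0 1)
    (c d u : ℝ) (hs : u * c < 1/2) :
    Integrable (fun ω => Real.exp (u * (c * (W ω + d)^2))) ℙ ∧
    ∫ ω, Real.exp (u * (c * (W ω + d)^2)) ∂ℙ
      = Real.exp (L1 (u*c) + (u*c)/(1-2*(u*c)) * d^2) := by
  have hgm : Measurable fun x : ℝ => Real.exp ((u*c) * (x + d)^2) := by measurability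
  have h1 : (fun ω => Real.exp (u * (c * (W ω + d)^2)))
      = (fun x => Real.exp ((u*c) * (x + d)^2)) ∘ W := by
    funext ω; simp only [Function.comp_apply, mul_assoc]
  constructor
  · have h := integrable_exp_sq_gaussian (δ := d) hs
    rw [← hWd] at h
    rw [h1]
    exact (integrable_map_measure hgm.aestronglyMeasurable hW.aemeasurable).mp h
  · rw [h1, show integral ℙ ((fun x => Real.exp ((u*c) * (x + d)^2)) ∘ W)
        = ∫ x, Real.exp ((u*c) * (x + d)^2) ∂(Measure.map W ℙ) from
        (integral_map hW.aemeasurable hgm.aestronglyMeasurable).symm, hWd]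
    exact integral_exp_sq_gaussian hs


/-- **Corollary 1 (identity case)**: for `Q = Σᵢ ηᵢ(Zᵢ + δᵢ)²` with `Zᵢ` i.i.d. standard
normal, not all `ηᵢ` zero, `L = maxᵢ |ηᵢ|`, `ξ = Σᵢ ηᵢ δᵢ² + Σᵢ ηᵢ`,
`α(L,t) = ℒ₁(tL)/L² − t/L`, `β(L,t) = tL/(L²(1 − 2tL)) − t/L` and
`ν(t) = 2(β(L,t) Σᵢ ηᵢ² δᵢ² + α(L,t) Σᵢ ηᵢ²)`, we have, for every `t ∈ (0, 1/(2L))`,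
`P(Q > q) ≤ exp(ν(t)/2 − (q − ξ) t)` for `q > ξ` and
`P(Q < q) ≤ exp(ν(t)/2 − (ξ − q) t)` for `q < ξ`. -/
theorem Q_identity_tail_bounds
    (n : ℕ) (Ω : Type*) [MeasureSpace Ω] [IsProbabilityMeasure (ℙ : Measure Ω)]
    (Z : Fin n → Ω → ℝ) (hZmeas : ∀ i, Measurable (Z i))
    (hZindep : iIndepFun Z ℙ)
    (hZdist : ∀ i, Measure.map (Z i) ℙ = gaussianReal 0 1)
    (η δ : Fin n → ℝ) (hη : ∃ i, η i ≠ 0)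
    (L ξ : ℝ)
    (hL : IsGreatest (Set.range fun i => |η i|) L)
    (hξ : ξ = (∑ i, η i * δ i ^ 2) + ∑ i, η i) :
    (∀ q > ξ, ∀ t ∈ Set.Ioo (0 : ℝ) (1 / (2 * L)),
      ℙ {ω | (∑ i, η i * (Z i ω + δ i) ^ 2) > q} ≤
        ENNReal.ofReal (Real.exp
          (2 * ((t * L / (L ^ 2 * (1 - 2 * t * L)) - t / L) * (∑ i, η i ^ 2 * δ i ^ 2) +
                (L1 (t * L) / L ^ 2 - t / L) * (∑ i, η i ^ 2)) / 2
            - (q - ξ) * t))) ∧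
    (∀ q < ξ, ∀ t ∈ Set.Ioo (0 : ℝ) (1 / (2 * L)),
      ℙ {ω | (∑ i, η i * (Z i ω + δ i) ^ 2) < q} ≤
        ENNReal.ofReal (Real.exp
          (2 * ((t * L / (L ^ 2 * (1 - 2 * t * L)) - t / L) * (∑ i, η i ^ 2 * δ i ^ 2) +
                (L1 (t * L) / L ^ 2 - t / L) * (∑ i, η i ^ 2)) / 2
            - (ξ - q) * t))) := by
  have hL0 : 0 < L := by
    obtain ⟨i, hi⟩ := hη
    exact lt_of_lt_of_le (abs_pos.mpr hi) (hL.2 ⟨i, rfl⟩)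
  have habs : ∀ i, |η i| ≤ L := fun i => hL.2 ⟨i, rfl⟩
  set X : Fin n → Ω → ℝ := fun i ω => η i * (Z i ω + δ i) ^ 2 with hX
  have hXmeas : ∀ i, Measurable (X i) :=
    fun i => (((hZmeas i).add_const _).pow_const 2).const_mul _
  have hXindep : iIndepFun X ℙ :=
    hZindep.comp (fun i x => η i * (x + δ i) ^ 2)
      (fun i => ((measurable_id.add_const _).pow_const 2).const_mul _)
  -- main estimate
  have main : ∀ t ∈ Set.Ioo (0 : ℝ) (1 / (2 * L)), ∀ u : ℝ, |u| = t →
      Integrable (fun ω => Real.exp (u * (∑ i, X i) ω)) ℙ ∧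
      mgf (∑ i, X i) ℙ u ≤ Real.exp (u * ξ +
        ((t * L / (L ^ 2 * (1 - 2 * t * L)) - t / L) * (∑ i, η i ^ 2 * δ i ^ 2) +
         (L1 (t * L) / L ^ 2 - t / L) * (∑ i, η i ^ 2))) := by
    rintro t ⟨ht0, ht2⟩ u hu
    have hx0 : 0 < t * L := mul_pos ht0 hL0
    have hx : t * L < 1 / 2 := by
      rw [lt_div_iff₀ (by positivity)] at ht2; nlinarith
    have hyi : ∀ i, |u * η i| ≤ t * L := by
      intro i
      rw [abs_mul, hu]
      exact mul_le_mul_of_nonneg_left (habs i) ht0.le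
    have hsi : ∀ i, u * η i < 1 / 2 :=
      fun i => lt_of_le_of_lt (le_trans (le_abs_self _) (hyi i)) hx
    have hInt : ∀ i, Integrable (fun ω => Real.exp (u * X i ω)) ℙ :=
      fun i => (mgf_aux (hZmeas i) (hZdist i) (η i) (δ i) u (hsi i)).1
    have hIntS : Integrable (fun ω => Real.exp (u * (∑ i, X i) ω)) ℙ :=
      hXindep.integrable_exp_mul_sum hXmeas (fun i _ => hInt i)
    refine ⟨hIntS, ?_⟩
    rw [hXindep.mgf_sum hXmeas]
    have hmgfi : ∀ i, mgf (X i) ℙ u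
        = Real.exp (L1 (u * η i) + (u * η i)/(1 - 2*(u * η i)) * δ i ^ 2) :=
      fun i => (mgf_aux (hZmeas i) (hZdist i) (η i) (δ i) u (hsi i)).2
    calc ∏ i, mgf (X i) ℙ u
        = Real.exp (∑ i, (L1 (u * η i) + (u * η i)/(1 - 2*(u * η i)) * δ i ^ 2)) := by
          rw [Real.exp_sum]; exact Finset.prod_congr rfl (fun i _ => hmgfi i)
      _ ≤ _ := by
          rw [Real.exp_le_exp]
          have hterm : ∀ i, L1 (u * η i) + (u * η i)/(1 - 2*(u * η i)) * δ i ^ 2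
              ≤ u * η i + u * (η i * δ i ^ 2)
                + (L1 (t*L) / L^2 - t/L) * η i ^ 2
                + (t*L / (L^2 * (1 - 2*(t*L))) - t/L) * (η i ^ 2 * δ i ^ 2) := by
            intro i
            have h1 := L1_key hx0 hx (hyi i)
            have h2 := mul_le_mul_of_nonneg_right (L2_key hx0 hx (hyi i)) (sq_nonneg (δ i))
            have hratio : (u * η i)^2 / (t*L)^2 = η i ^ 2 / L ^ 2 := by
              rw [mul_pow, mul_pow, ← sq_abs u, hu]
              field_simp
            rw [hratio] at h1 h2
            have hc3 : η i ^ 2 / L ^ 2 * (L1 (t*L) - t*L)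
                = (L1 (t*L) / L^2 - t/L) * η i ^ 2 := by
              field_simp
            have hc4 : η i ^ 2 / L ^ 2 * ((t*L)/(1 - 2*(t*L)) - t*L) * δ i ^ 2
                = (t*L / (L^2 * (1 - 2*(t*L))) - t/L) * (η i ^ 2 * δ i ^ 2) := by
              have : (1:ℝ) - 2*(t*L) ≠ 0 := by nlinarith
              field_simp
            nlinarith [h1, h2]
          calc ∑ i, (L1 (u * η i) + (u * η i)/(1 - 2*(u * η i)) * δ i ^ 2)
              ≤ ∑ i, (u * η i + u * (η i * δ i ^ 2)
                + (L1 (t*L) / L^2 - t/L) * η i ^ 2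
                + (t*L / (L^2 * (1 - 2*(t*L))) - t/L) * (η i ^ 2 * δ i ^ 2)) :=
              Finset.sum_le_sum (fun i _ => hterm i)
            _ = u * ξ + ((t * L / (L ^ 2 * (1 - 2 * t * L)) - t / L) * (∑ i, η i ^ 2 * δ i ^ 2) +
                (L1 (t * L) / L ^ 2 - t / L) * (∑ i, η i ^ 2)) := by
                simp only [Finset.sum_add_distrib, ← Finset.mul_sum, hξ]
                ring_nf
  constructor
  · rintro q hq t ht
    obtain ⟨hI, hM⟩ := main t ht t (abs_of_pos ht.1)
    calc ℙ {ω | (∑ i, η i * (Z i ω + δ i) ^ 2) > q}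
        ≤ ℙ {ω | q ≤ (∑ i, X i) ω} := by
          refine measure_mono (fun ω hω => ?_)
          simp only [Set.mem_setOf_eq, Finset.sum_apply]
          exact le_of_lt hω
      _ = ENNReal.ofReal ((ℙ {ω | q ≤ (∑ i, X i) ω}).toReal) :=
          (ENNReal.ofReal_toReal (measure_ne_top _ _)).symm
      _ ≤ ENNReal.ofReal (Real.exp (-t * q) * mgf (∑ i, X i) ℙ t) :=
          ENNReal.ofReal_le_ofReal (measure_ge_le_exp_mul_mgf q ht.1.le hI)
      _ ≤ _ := by
          refine ENNReal.ofReal_le_ofReal ?_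
          calc Real.exp (-t * q) * mgf (∑ i, X i) ℙ t
              ≤ Real.exp (-t * q) * Real.exp (t * ξ + _) :=
                mul_le_mul_of_nonneg_left hM (Real.exp_pos _).le
            _ ≤ _ := by rw [← Real.exp_add]; exact Real.exp_le_exp.mpr (by ring_nf; rfl)
  · rintro q hq t ht
    obtain ⟨hI, hM⟩ := main t ht (-t) ((abs_neg t).trans (abs_of_pos ht.1))
    calc ℙ {ω | (∑ i, η i * (Z i ω + δ i) ^ 2) < q}
        ≤ ℙ {ω | (∑ i, X i) ω ≤ q} := by
          refine measure_mono (fun ω hω => ?_)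
          simp only [Set.mem_setOf_eq, Finset.sum_apply]
          exact le_of_lt hω
      _ = ENNReal.ofReal ((ℙ {ω | (∑ i, X i) ω ≤ q}).toReal) :=
          (ENNReal.ofReal_toReal (measure_ne_top _ _)).symm
      _ ≤ ENNReal.ofReal (Real.exp (-(-t) * q) * mgf (∑ i, X i) ℙ (-t)) :=
          ENNReal.ofReal_le_ofReal
            (measure_le_le_exp_mul_mgf q (neg_nonpos.mpr ht.1.le) hI)
      _ ≤ _ := by
          refine ENNReal.ofReal_le_ofReal ?_
          calc Real.exp (-(-t) * q) * mgf (∑ i, X i) ℙ (-t)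
              ≤ Real.exp (-(-t) * q) * Real.exp ((-t) * ξ + _) :=
                mul_le_mul_of_nonneg_left hM (Real.exp_pos _).le
            _ ≤ _ := by rw [← Real.exp_add]; exact Real.exp_le_exp.mpr (by ring_nf; rfl)
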